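/- Let (Z, ≤) be a linear order and let {P_1, …, P_m} be a finite partition of Z. Then there exists a finite partition {V_1, …, V_r} of Z such that every V_j is convex in (Z, ≤) and entangled with respect to the partition: for every j there is a sequence (z_n)_{n∈ℕ} of elements of V_j that is monotone (nondecreasing or nonincreasing) and such that for every block P_i with P_i ∩ V_j ≠ ∅, z_n ∈ P_i for infinitely many n. -/
import Mathlib

open scoped Classical

section Aux

variable {Z : Type} [LinearOrder Z]

/-- Auxiliary: the entanglement property for a set `V`. -/
def EntangledIn (m : ℕ) (P : Fin m → Set Z) (V : Set Z) : Prop :=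
  ∃ zs : ℕ → Z, (∀ n, zs n ∈ V) ∧
    ((∀ n, zs n ≤ zs (n + 1)) ∨ (∀ n, zs (n + 1) ≤ zs n)) ∧
    ∀ i, (P i ∩ V).Nonempty → {n : ℕ | zs n ∈ P i}.Infinite

/-- Auxiliary: `S` admits a finite decomposition into convex entangled pieces. -/
def GoodIn (m : ℕ) (P : Fin m → Set Z) (S : Set Z) : Prop :=
  ∃ (r : ℕ) (V : Fin r → Set Z),
    (∀ j, V j ⊆ S) ∧ (∀ z ∈ S, ∃! j, z ∈ V j) ∧
    (∀ j, ∀ u v w : Z, u ∈ V j → w ∈ V j → u ≤ v → v ≤ w → v ∈ V j) ∧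
    (∀ j, EntangledIn m P (V j))

/-- A sequence in `V` that at step `n+1` moves up to a point of color `n % m`
if that color occurs in `V`. -/
noncomputable def entSeq {m : ℕ} (P : Fin m → Set Z) (V : Set Z) (hm : 0 < m)
    (hb : ∀ x ∈ V, ∀ i, (P i ∩ V).Nonempty → ∃ z ∈ P i ∩ V, x ≤ z)
    (x₀ : {x : Z // x ∈ V}) : ℕ → {x : Z // x ∈ V}
  | 0 => x₀
  | n + 1 =>
    if h : (P ⟨n % m, Nat.mod_lt n hm⟩ ∩ V).Nonempty then
      ⟨(hb (entSeq P V hm hb x₀ n).1 (entSeq P V hm hb x₀ n).2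
          ⟨n % m, Nat.mod_lt n hm⟩ h).choose,
       (hb (entSeq P V hm hb x₀ n).1 (entSeq P V hm hb x₀ n).2
          ⟨n % m, Nat.mod_lt n hm⟩ h).choose_spec.1.2⟩
    else entSeq P V hm hb x₀ n

lemma ent_of_balAbove {m : ℕ} (P : Fin m → Set Z) (V : Set Z)
    (hne : V.Nonempty)
    (hb : ∀ x ∈ V, ∀ i, (P i ∩ V).Nonempty → ∃ z ∈ P i ∩ V, x ≤ z) :
    EntangledIn m P V := by
  obtain ⟨x₀, hx₀⟩ := hne
  rcases Nat.eq_zero_or_pos m with hm | hm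
  · subst hm
    exact ⟨fun _ => x₀, fun _ => hx₀, Or.inl fun n => le_rfl, fun i => i.elim0⟩
  · have key : ∀ n, ((entSeq P V hm hb ⟨x₀, hx₀⟩ n : Z) ≤ entSeq P V hm hb ⟨x₀, hx₀⟩ (n + 1)) ∧
        ((P ⟨n % m, Nat.mod_lt n hm⟩ ∩ V).Nonempty →
          (entSeq P V hm hb ⟨x₀, hx₀⟩ (n + 1) : Z) ∈ P ⟨n % m, Nat.mod_lt n hm⟩) := by
      intro n
      by_cases h : (P ⟨n % m, Nat.mod_lt n hm⟩ ∩ V).Nonempty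
      · constructor
        · simp only [entSeq, dif_pos h]
          exact (hb (entSeq P V hm hb ⟨x₀, hx₀⟩ n).1 (entSeq P V hm hb ⟨x₀, hx₀⟩ n).2
            ⟨n % m, Nat.mod_lt n hm⟩ h).choose_spec.2
        · intro _
          simp only [entSeq, dif_pos h]
          exact (hb (entSeq P V hm hb ⟨x₀, hx₀⟩ n).1 (entSeq P V hm hb ⟨x₀, hx₀⟩ n).2
            ⟨n % m, Nat.mod_lt n hm⟩ h).choose_spec.1.1
      · constructor
        · simp only [entSeq, dif_neg h]
          exact le_rfl
        · intro h'; exact absurd h' h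
    refine ⟨fun n => (entSeq P V hm hb ⟨x₀, hx₀⟩ n : Z),
      fun n => (entSeq P V hm hb ⟨x₀, hx₀⟩ n).2, Or.inl fun n => (key n).1, ?_⟩
    intro i hi
    apply Set.infinite_of_not_bddAbove
    rintro ⟨b, hbub⟩
    set n₀ := (i : ℕ) + (b + 1) * m with hn₀
    have hidx : (⟨n₀ % m, Nat.mod_lt n₀ hm⟩ : Fin m) = i := by
      apply Fin.ext
      simp only [hn₀, Nat.add_mul_mod_self_right]
      exact Nat.mod_eq_of_lt i.isLt
    have hmem : (entSeq P V hm hb ⟨x₀, hx₀⟩ (n₀ + 1) : Z) ∈ P i := by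
      have := (key n₀).2 (by rw [hidx]; exact hi)
      rwa [hidx] at this
    have hle : n₀ + 1 ≤ b := hbub hmem
    have hbm : b + 1 ≤ (b + 1) * m := by
      calc b + 1 = (b + 1) * 1 := (mul_one _).symm
        _ ≤ (b + 1) * m := Nat.mul_le_mul_left _ hm
    omega

/-- Every nonempty set has a nonempty final segment on which every occurring
color occurs above every point. -/
lemma exists_top (m : ℕ) (P : Fin m → Set Z) (S : Set Z) (hS : S.Nonempty) :
    ∃ E, E ⊆ S ∧ E.Nonempty ∧ (∀ x ∈ E, ∀ y ∈ S, x ≤ y → y ∈ E) ∧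
      ∀ x ∈ E, ∀ i, (P i ∩ E).Nonempty → ∃ z ∈ P i ∩ E, x ≤ z := by
  by_cases hbad : ∃ i : Fin m, ∃ x ∈ S, ∀ z ∈ P i ∩ S, ¬ x ≤ z
  · obtain ⟨i₁, hi₁⟩ := hbad
    set f : Fin m → Z := fun i =>
      if h : ∃ x ∈ S, ∀ z ∈ P i ∩ S, ¬ x ≤ z then h.choose else hS.choose with hf
    have hfS : ∀ i, f i ∈ S := by
      intro i
      by_cases h : ∃ x ∈ S, ∀ z ∈ P i ∩ S, ¬ x ≤ z
      · simp only [hf, dif_pos h]; exact h.choose_spec.1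
      · simp only [hf, dif_neg h]; exact hS.choose_spec
    have hfprop : ∀ i, (∃ x ∈ S, ∀ z ∈ P i ∩ S, ¬ x ≤ z) →
        ∀ z ∈ P i ∩ S, ¬ f i ≤ z := by
      intro i h
      simp only [hf, dif_pos h]
      exact h.choose_spec.2
    obtain ⟨i₀, -, hmax⟩ := Finset.exists_max_image (Finset.univ : Finset (Fin m)) f
      ⟨i₁, Finset.mem_univ _⟩
    refine ⟨{z | z ∈ S ∧ f i₀ ≤ z}, fun z hz => hz.1, ⟨f i₀, hfS i₀, le_rfl⟩, ?_, ?_⟩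
    · intro x hx y hy hxy
      exact ⟨hy, le_trans hx.2 hxy⟩
    · intro x hx i hi
      obtain ⟨p, hpP, hpE⟩ := hi
      have hnotbad : ¬ ∃ x' ∈ S, ∀ z ∈ P i ∩ S, ¬ x' ≤ z := by
        intro h
        exact hfprop i h p ⟨hpP, hpE.1⟩ (le_trans (hmax i (Finset.mem_univ i)) hpE.2)
      have hcof : ∃ z ∈ P i ∩ S, x ≤ z := by
        by_contra hno
        push_neg at hno
        exact hnotbad ⟨x, hx.1, fun z hz => not_le.mpr (hno z hz)⟩
      obtain ⟨z, hzPS, hxz⟩ := hcof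
      exact ⟨z, ⟨hzPS.1, hzPS.2, le_trans hx.2 hxz⟩, hxz⟩
  · push_neg at hbad
    refine ⟨S, subset_rfl, hS, fun x _ y hy _ => hy, ?_⟩
    intro x hx i _
    obtain ⟨z, hz, hxz⟩ := hbad i x hx
    exact ⟨z, hz, hxz⟩

lemma ent_of_balBelow {m : ℕ} (P : Fin m → Set Z) (V : Set Z)
    (hne : V.Nonempty)
    (hb : ∀ x ∈ V, ∀ i, (P i ∩ V).Nonempty → ∃ z ∈ P i ∩ V, z ≤ x) :
    EntangledIn m P V := by
  obtain ⟨zs, h1, h2, h3⟩ := ent_of_balAbove (Z := Zᵒᵈ) P V hne hb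
  exact ⟨zs, h1, h2.symm, h3⟩

lemma exists_bot (m : ℕ) (P : Fin m → Set Z) (S : Set Z) (hS : S.Nonempty) :
    ∃ E, E ⊆ S ∧ E.Nonempty ∧ (∀ x ∈ E, ∀ y ∈ S, y ≤ x → y ∈ E) ∧
      ∀ x ∈ E, ∀ i, (P i ∩ E).Nonempty → ∃ z ∈ P i ∩ E, z ≤ x :=
  exists_top (Z := Zᵒᵈ) m P S hS

/-- Adjoining a disjoint convex entangled piece preserves goodness. -/
lemma good_insert {m : ℕ} {P : Fin m → Set Z} {D E : Set Z}
    (hD : GoodIn m P D) (hE : EntangledIn m P E)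
    (hconv : ∀ u v w : Z, u ∈ E → w ∈ E → u ≤ v → v ≤ w → v ∈ E)
    (hdisj : ∀ z ∈ E, z ∉ D) : GoodIn m P (D ∪ E) := by
  obtain ⟨r, V, hsub, huniq, hcv, hent⟩ := hD
  refine ⟨r + 1, Fin.cons E V, ?_, ?_, ?_, ?_⟩
  · intro j
    rcases Fin.eq_zero_or_eq_succ j with rfl | ⟨i, rfl⟩
    · simp only [Fin.cons_zero]; exact fun z hz => Or.inr hz
    · simp only [Fin.cons_succ]; exact fun z hz => Or.inl (hsub i hz)
  · intro z hz
    rcases hz with hzD | hzE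
    · obtain ⟨j, hj, hjun⟩ := huniq z hzD
      refine ⟨j.succ, by simp only [Fin.cons_succ]; exact hj, ?_⟩
      intro j' hj'
      rcases Fin.eq_zero_or_eq_succ j' with rfl | ⟨i, rfl⟩
      · simp only [Fin.cons_zero] at hj'
        exact absurd hzD (hdisj z hj')
      · simp only [Fin.cons_succ] at hj'
        rw [hjun i hj']
    · refine ⟨0, by simp only [Fin.cons_zero]; exact hzE, ?_⟩
      intro j' hj'
      rcases Fin.eq_zero_or_eq_succ j' with rfl | ⟨i, rfl⟩
      · rfl
      · simp only [Fin.cons_succ] at hj'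
        exact absurd (hsub i hj') (hdisj z hzE)
  · intro j
    rcases Fin.eq_zero_or_eq_succ j with rfl | ⟨i, rfl⟩
    · simp only [Fin.cons_zero]; exact hconv
    · simp only [Fin.cons_succ]; exact hcv i
  · intro j
    rcases Fin.eq_zero_or_eq_succ j with rfl | ⟨i, rfl⟩
    · simp only [Fin.cons_zero]; exact hE
    · simp only [Fin.cons_succ]; exact hent i

lemma good_empty {m : ℕ} (P : Fin m → Set Z) : GoodIn m P (∅ : Set Z) :=
  ⟨0, fun j => j.elim0, fun j => j.elim0, fun z hz => absurd hz (Set.notMem_empty z),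
    fun j => j.elim0, fun j => j.elim0⟩

/-- Main auxiliary theorem: the whole order is good. -/
lemma good_univ (m : ℕ) (P : Fin m → Set Z) : GoodIn m P (Set.univ : Set Z) := by
  set Dstar : Set Z := {z | ∃ D : Set Z, (IsLowerSet D ∧ GoodIn m P D) ∧ z ∈ D} with hDs
  have hlow : IsLowerSet Dstar := by
    rintro x y hxy ⟨D, hD, hx⟩
    exact ⟨D, hD, hD.1 hxy hx⟩
  have hgood : GoodIn m P Dstar := by
    by_cases hne : Dstar.Nonempty
    · obtain ⟨E, hES, hEne, hup, hbal⟩ := exists_top m P Dstar hne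
      obtain ⟨e, he⟩ := hEne
      obtain ⟨D₁, hD₁, heD₁⟩ := hES he
      by_cases hsub : ∀ z ∈ Dstar, z ∈ D₁
      · have hEq : Dstar = D₁ := Set.Subset.antisymm hsub (fun z hz => ⟨D₁, hD₁, hz⟩)
        rw [hEq]; exact hD₁.2
      · push_neg at hsub
        set F : Set Z := {z | z ∈ Dstar ∧ z ∉ D₁} with hF
        have hFE : ∀ z ∈ F, z ∈ E := by
          intro z hz
          have hez : e ≤ z := by
            by_contra h
            push_neg at h
            exact hz.2 (hD₁.1 h.le heD₁)
          exact hup e he z hz.1 hez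
        have hFne : F.Nonempty := by
          obtain ⟨z, hz1, hz2⟩ := hsub
          exact ⟨z, hz1, hz2⟩
        have hFbal : ∀ x ∈ F, ∀ i, (P i ∩ F).Nonempty → ∃ z ∈ P i ∩ F, x ≤ z := by
          rintro x hx i ⟨p, hp⟩
          rcases le_total x p with h | h
          · obtain ⟨z, hz, hpz⟩ := hbal p (hFE p hp.2) i ⟨p, hp.1, hFE p hp.2⟩
            refine ⟨z, ⟨hz.1, hES hz.2, fun hzD => hp.2.2 (hD₁.1 hpz hzD)⟩, le_trans h hpz⟩
          · obtain ⟨z, hz, hxz⟩ := hbal x (hFE x hx) i ⟨p, hp.1, hFE p hp.2⟩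
            refine ⟨z, ⟨hz.1, hES hz.2, fun hzD => hp.2.2 (hD₁.1 (le_trans h hxz) hzD)⟩, hxz⟩
        have hFent : EntangledIn m P F := ent_of_balAbove P F hFne hFbal
        have hFconv : ∀ u v w : Z, u ∈ F → w ∈ F → u ≤ v → v ≤ w → v ∈ F := by
          intro u v w hu hw huv hvw
          exact ⟨hlow hvw hw.1, fun hv => hu.2 (hD₁.1 huv hv)⟩
        have hgood' := good_insert hD₁.2 hFent hFconv (fun z hz => hz.2)
        have hEq : D₁ ∪ F = Dstar := by
          ext z
          constructor
          · rintro (h | h)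
            · exact ⟨D₁, hD₁, h⟩
            · exact h.1
          · intro hz
            by_cases h : z ∈ D₁
            · exact Or.inl h
            · exact Or.inr ⟨hz, h⟩
        rwa [hEq] at hgood'
    · rw [Set.not_nonempty_iff_eq_empty] at hne
      rw [hne]
      exact good_empty P
  have hall : ∀ z : Z, z ∈ Dstar := by
    by_contra h
    push_neg at h
    obtain ⟨z₀, hz₀⟩ := h
    obtain ⟨E', hE'U, hE'ne, hdown, hbal'⟩ :=
      exists_bot m P {z : Z | z ∉ Dstar} ⟨z₀, hz₀⟩
    have hE'ent : EntangledIn m P E' := ent_of_balBelow P E' hE'ne hbal'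
    have hE'conv : ∀ u v w : Z, u ∈ E' → w ∈ E' → u ≤ v → v ≤ w → v ∈ E' := by
      intro u v w hu hw huv hvw
      have hvU : v ∉ Dstar := fun hv => (hE'U hu) (hlow huv hv)
      exact hdown w hw v hvU hvw
    have hgood' := good_insert hgood hE'ent hE'conv (fun z hz => hE'U hz)
    have hlow' : IsLowerSet (Dstar ∪ E') := by
      rintro y x hxy (hy | hy)
      · exact Or.inl (hlow hxy hy)
      · by_cases hx : x ∈ Dstar
        · exact Or.inl hx
        · exact Or.inr (hdown y hy x hx hxy)
    obtain ⟨e', he'⟩ := hE'ne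
    have : e' ∈ Dstar := ⟨Dstar ∪ E', ⟨hlow', hgood'⟩, Or.inr he'⟩
    exact (hE'U he') this
  have hEq : Dstar = Set.univ := Set.eq_univ_of_forall hall
  rw [← hEq]
  exact hgood

end Aux

/-- every finite partition of a linear order admits a finite
decomposition into convex sets, each of which is entangled with respect to the
partition. -/
theorem stmt_16 {Z : Type} [LinearOrder Z] (m : ℕ) (P : Fin m → Set Z)
    (hP : ∀ z : Z, ∃! i, z ∈ P i) :
    ∃ (r : ℕ) (V : Fin r → Set Z),
      (∀ z : Z, ∃! j, z ∈ V j) ∧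
      (∀ j, ∀ u v w : Z, u ∈ V j → w ∈ V j → u ≤ v → v ≤ w → v ∈ V j) ∧
      (∀ j, ∃ zs : ℕ → Z, (∀ n, zs n ∈ V j) ∧
        ((∀ n, zs n ≤ zs (n + 1)) ∨ (∀ n, zs (n + 1) ≤ zs n)) ∧
        ∀ i, (P i ∩ V j).Nonempty → {n : ℕ | zs n ∈ P i}.Infinite) := by
  obtain ⟨r, V, hsub, huniq, hconv, hent⟩ := good_univ m P
  exact ⟨r, V, fun z => huniq z (Set.mem_univ z), hconv, hent⟩
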